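/- arXiv:0904.0474 — 4 statements merged into one kernel-verified Lean document; each statement's English description precedes it below -/
import Mathlib

section
/- Let U ⊆ ℝ be an open interval and let g_1,…,g_k: U → ℝ be real-analytic functions, linearly independent over ℝ, such that the Wronski matrix G(x) = ( g_j^{(i−1)}(x) )_{1≤i,j≤k} is invertible for every x ∈ U. Then G, regarded as the map x ↦ G(x) with rows g_i(x) = ( g_1^{(i−1)}(x), …, g_k^{(i−1)}(x) ), is hierarchic on U. -/
open MeasureTheory Metric Filter

noncomputable section

/-- `G` is hierarchic on `B`: for every subspace `V ⊆ ℝ^k` of codimension `r` with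
`1 ≤ r ≤ k − 1`, the set `{x ∈ B : V ⊕ span(g₁(x), …, g_r(x)) = ℝ^k}` is dense
in `B`, where `g_i(x)` denotes the `i`-th row of `G(x)`. -/
def Hierarchic {X : Type*} [TopologicalSpace X] {k : ℕ}
    (G : X → Matrix (Fin k) (Fin k) ℝ) (B : Set X) : Prop :=
  ∀ V : Submodule ℝ (Fin k → ℝ),
    0 < Module.finrank ℝ V → Module.finrank ℝ V < k →
    B ⊆ closure {x ∈ B | IsCompl V (Submodule.span ℝ
      ((fun j => G x j) '' {j : Fin k | (j : ℕ) < k - Module.finrank ℝ V}))}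

/-- The Wronski matrix of `g₁, …, g_k`: its `i`-th row is the vector of `(i−1)`-th
derivatives `(g₁^{(i−1)}(x), …, g_k^{(i−1)}(x))`. -/
def wronskiMatrix {k : ℕ} (g : Fin k → ℝ → ℝ) (x : ℝ) : Matrix (Fin k) (Fin k) ℝ :=
  Matrix.of fun i j : Fin k => iteratedDeriv (i : ℕ) (g j) x

open Topology


lemma analyticOnNhd_iteratedDeriv {f : ℝ → ℝ} {s : Set ℝ} (hf : AnalyticOnNhd ℝ f s)
    (n : ℕ) : AnalyticOnNhd ℝ (iteratedDeriv n f) s := by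
  induction n with
  | zero => simpa [iteratedDeriv_zero] using hf
  | succ n ih => rw [iteratedDeriv_succ]; exact ih.deriv

lemma pascal_sum (U V : ℕ → ℝ) (n : ℕ) :
    ∑ m ∈ Finset.range (n + 1), (n.choose m : ℝ) * (U (n - m + 1) * V m)
      + ∑ m ∈ Finset.range (n + 1), (n.choose m : ℝ) * (U (n - m) * V (m + 1))
    = ∑ m ∈ Finset.range (n + 2), ((n + 1).choose m : ℝ) * (U (n + 1 - m) * V m) := by
  have hR : ∑ m ∈ Finset.range (n + 2), ((n + 1).choose m : ℝ) * (U (n + 1 - m) * V m)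
      = ∑ m ∈ Finset.range (n + 1), (((n.choose m : ℝ)) * (U (n - m) * V (m + 1))
          + (n.choose (m + 1) : ℝ) * (U (n - m) * V (m + 1)))
        + U (n + 1) * V 0 := by
    rw [Finset.sum_range_succ' (fun m => ((n + 1).choose m : ℝ) * (U (n + 1 - m) * V m)) (n + 1)]
    simp only [Nat.choose_zero_right, Nat.cast_one, one_mul, Nat.sub_zero]
    congr 1
    refine Finset.sum_congr rfl fun m hm => ?_
    have h1 : n + 1 - (m + 1) = n - m := by omega
    rw [h1, Nat.choose_succ_succ']
    push_cast
    ring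
  have hL1 : ∑ m ∈ Finset.range (n + 1), (n.choose m : ℝ) * (U (n - m + 1) * V m)
      = ∑ m ∈ Finset.range (n + 1), (n.choose (m + 1) : ℝ) * (U (n - m) * V (m + 1))
        + U (n + 1) * V 0 := by
    rw [Finset.sum_range_succ' (fun m => (n.choose m : ℝ) * (U (n - m + 1) * V m)) n]
    rw [Finset.sum_range_succ (fun m => (n.choose (m + 1) : ℝ) * (U (n - m) * V (m + 1))) n]
    simp only [Nat.choose_zero_right, Nat.cast_one, one_mul, Nat.sub_zero,
      Nat.choose_succ_self, Nat.cast_zero, zero_mul, add_zero]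
    congr 1
    refine Finset.sum_congr rfl fun m hm => ?_
    have h1 : n - (m + 1) + 1 = n - m := by
      have := Finset.mem_range.mp hm; omega
    rw [h1]
  rw [hR, Finset.sum_add_distrib, hL1]
  ring

lemma my_leibniz {u v : ℝ → ℝ} {s : Set ℝ} (hs : IsOpen s) (hu : AnalyticOnNhd ℝ u s)
    (hv : AnalyticOnNhd ℝ v s) (n : ℕ) {x : ℝ} (hx : x ∈ s) :
    iteratedDeriv n (fun y => u y * v y) x
      = ∑ m ∈ Finset.range (n + 1),
          (n.choose m : ℝ) * (iteratedDeriv (n - m) u x * iteratedDeriv m v x) := by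
  induction n generalizing x with
  | zero => simp
  | succ n ih =>
    have hder : ∀ m : ℕ, ∀ w : ℝ → ℝ, AnalyticOnNhd ℝ w s →
        DifferentiableAt ℝ (iteratedDeriv m w) x :=
      fun m w hw => ((analyticOnNhd_iteratedDeriv hw m) x hx).differentiableAt
    rw [iteratedDeriv_succ]
    have hev : iteratedDeriv n (fun y => u y * v y) =ᶠ[𝓝 x]
        fun y => ∑ m ∈ Finset.range (n + 1),
          (n.choose m : ℝ) * (iteratedDeriv (n - m) u y * iteratedDeriv m v y) := by
      filter_upwards [hs.mem_nhds hx] with y hy using ih hy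
    rw [hev.deriv_eq]
    rw [deriv_fun_sum fun m _ => (((hder _ u hu).fun_mul (hder _ v hv)).const_mul _)]
    have hterm : ∀ m ∈ Finset.range (n + 1),
        deriv (fun y => (n.choose m : ℝ) * (iteratedDeriv (n - m) u y * iteratedDeriv m v y)) x
        = (n.choose m : ℝ) * (iteratedDeriv (n - m + 1) u x * iteratedDeriv m v x)
          + (n.choose m : ℝ) * (iteratedDeriv (n - m) u x * iteratedDeriv (m + 1) v x) := by
      intro m _
      rw [deriv_const_mul _ ((hder _ u hu).fun_mul (hder _ v hv)),
        deriv_fun_mul (hder _ u hu) (hder _ v hv)]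
      rw [iteratedDeriv_succ, iteratedDeriv_succ]
      ring
    rw [Finset.sum_congr rfl hterm, Finset.sum_add_distrib]
    exact pascal_sum (fun m => iteratedDeriv m u x) (fun m => iteratedDeriv m v x) n

lemma wronski_smul_det {n : ℕ} {u : ℝ → ℝ} {q : Fin n → ℝ → ℝ} {s : Set ℝ} (hs : IsOpen s)
    (hu : AnalyticOnNhd ℝ u s) (hq : ∀ j, AnalyticOnNhd ℝ (q j) s) {x : ℝ} (hx : x ∈ s) :
    (wronskiMatrix (fun j y => u y * q j y) x).det = u x ^ n * (wronskiMatrix q x).det := by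
  set L : Matrix (Fin n) (Fin n) ℝ := Matrix.of fun i m : Fin n =>
    if (m : ℕ) ≤ (i : ℕ) then ((i : ℕ).choose ((i : ℕ) - (m : ℕ)) : ℝ)
      * iteratedDeriv ((i : ℕ) - (m : ℕ)) u x else 0 with hL
  have hfac : wronskiMatrix (fun j y => u y * q j y) x = L * wronskiMatrix q x := by
    ext i j
    rw [Matrix.mul_apply]
    show iteratedDeriv (i : ℕ) (fun y => u y * q j y) x = _
    rw [my_leibniz hs hu (hq j) (i : ℕ) hx]
    have step1 : ∑ m : Fin n, L i m * wronskiMatrix q x m j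
        = ∑ m ∈ Finset.range n, (if m ≤ (i : ℕ) then ((i : ℕ).choose ((i : ℕ) - m) : ℝ)
            * iteratedDeriv ((i : ℕ) - m) u x else 0) * iteratedDeriv m (q j) x := by
      rw [← Fin.sum_univ_eq_sum_range (fun m => (if m ≤ (i : ℕ) then ((i : ℕ).choose ((i : ℕ) - m) : ℝ)
            * iteratedDeriv ((i : ℕ) - m) u x else 0) * iteratedDeriv m (q j) x) n]
      rfl
    rw [step1]
    rw [← Finset.sum_subset (Finset.range_subset_range.mpr (Nat.succ_le_of_lt i.isLt))
      (fun m _ hm => by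
        have hni : ¬ m ≤ (i : ℕ) := fun h => hm (Finset.mem_range.mpr (Nat.lt_succ_of_le h))
        rw [if_neg hni, zero_mul])]
    refine Finset.sum_congr rfl fun m hm => ?_
    have hmi : m ≤ (i : ℕ) := by have := Finset.mem_range.mp hm; omega
    rw [if_pos hmi]
    have : (i : ℕ).choose m = (i : ℕ).choose ((i : ℕ) - m) := (Nat.choose_symm hmi).symm
    rw [← this]
    ring
  rw [hfac, Matrix.det_mul]
  have hLdet : L.det = u x ^ n := by
    rw [Matrix.det_of_lowerTriangular L (by
      intro i m h
      have : (m : ℕ) > (i : ℕ) := h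
      simp only [hL, Matrix.of_apply]
      rw [if_neg (by omega)])]
    have : ∀ i : Fin n, L i i = u x := by
      intro i
      simp [hL, Nat.choose_zero_right, iteratedDeriv_zero]
    rw [Finset.prod_congr rfl fun i _ => this i]
    simp
  rw [hLdet]

lemma my_iteratedDeriv_const (n : ℕ) (c : ℝ) :
    iteratedDeriv n (fun _ : ℝ => c) = fun _ => if n = 0 then c else 0 := by
  induction n generalizing c with
  | zero => simp
  | succ n ih =>
    rw [iteratedDeriv_succ', deriv_const']
    rw [ih 0]
    simp

lemma wronski_cons_det {n : ℕ} (q : Fin n → ℝ → ℝ) (x : ℝ) :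
    (wronskiMatrix (Fin.cons (fun _ => (1 : ℝ)) q) x).det
      = (wronskiMatrix (fun j => deriv (q j)) x).det := by
  set A := wronskiMatrix (Fin.cons (fun _ => (1 : ℝ)) q) x with hA
  rw [Matrix.det_succ_column_zero]
  have h0 : ∀ i : Fin (n + 1), A i 0 = if (i : ℕ) = 0 then 1 else 0 := by
    intro i
    have hA0 : A i 0 = iteratedDeriv (i : ℕ) (fun _ : ℝ => (1 : ℝ)) x := by
      simp only [hA, wronskiMatrix, Matrix.of_apply, Fin.cons_zero]
    rw [hA0, my_iteratedDeriv_const]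
  rw [Finset.sum_eq_single 0]
  · have hsub : A.submatrix (0 : Fin (n + 1)).succAbove Fin.succ
        = wronskiMatrix (fun j => deriv (q j)) x := by
      ext i j
      have : A.submatrix (0 : Fin (n + 1)).succAbove Fin.succ i j
          = iteratedDeriv ((i : ℕ) + 1) (q j) x := by
        simp only [hA, Matrix.submatrix_apply, Fin.succAbove_zero, wronskiMatrix,
          Matrix.of_apply, Fin.cons_succ, Fin.val_succ]
      rw [this, iteratedDeriv_succ']
      rfl
    rw [h0 0, hsub]
    norm_num
  · intro i _ hi
    have hiv : (i : ℕ) ≠ 0 := fun h => hi (Fin.ext h)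
    rw [h0 i, if_neg hiv]
    simp
  · intro h
    exact absurd (Finset.mem_univ 0) h

theorem bocher : ∀ (n : ℕ) (U : Set ℝ), IsOpen U → IsPreconnected U → U.Nonempty →
    ∀ f : Fin n → ℝ → ℝ, (∀ j, AnalyticOnNhd ℝ (f j) U) →
    (∀ x ∈ U, (wronskiMatrix f x).det = 0) →
    ∃ c : Fin n → ℝ, c ≠ 0 ∧ ∀ x ∈ U, ∑ j, c j * f j x = 0 := by
  intro n
  induction n with
  | zero =>
    rintro U _ _ ⟨x0, hx0⟩ f _ hW
    exact absurd (hW x0 hx0) (by simp [wronskiMatrix, Matrix.det_fin_zero])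
  | succ n ih =>
    intro U hUo hUc hUne f hf hW
    by_cases h0 : ∀ x ∈ U, f 0 x = 0
    · refine ⟨Pi.single 0 1, ?_, fun x hx => ?_⟩
      · intro h
        have := congrFun h 0
        simp [Pi.single_apply] at this
      · rw [Fin.sum_univ_succ]
        simp only [Pi.single_eq_same, one_mul]
        have hz : ∀ j : Fin n, (Pi.single 0 1 : Fin (n+1) → ℝ) j.succ = 0 := by
          intro j
          simp [Pi.single_apply, Fin.succ_ne_zero]
        rw [Finset.sum_congr rfl fun j _ => by rw [hz j, zero_mul]]
        simp [h0 x hx]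
    · push_neg at h0
      obtain ⟨x1, hx1U, hx1⟩ := h0
      set s : Set ℝ := {y | y ∈ U ∧ f 0 y ≠ 0} with hsdef
      have hso : IsOpen s := by
        rw [isOpen_iff_mem_nhds]
        intro y hy
        have h1 : ∀ᶠ z in 𝓝 y, z ∈ U := hUo.mem_nhds hy.1
        have h2 : ∀ᶠ z in 𝓝 y, f 0 z ≠ 0 := (hf 0 y hy.1).continuousAt.eventually_ne hy.2
        exact h1.and h2
      have hx1s : x1 ∈ s := ⟨hx1U, hx1⟩
      obtain ⟨ε, hε, hball⟩ := Metric.isOpen_iff.mp hso x1 hx1s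
      set B := Metric.ball x1 ε with hBdef
      have hBo : IsOpen B := Metric.isOpen_ball
      have hBne : x1 ∈ B := Metric.mem_ball_self hε
      have hBU : B ⊆ U := fun y hy => (hball hy).1
      have hBf0 : ∀ y ∈ B, f 0 y ≠ 0 := fun y hy => (hball hy).2
      set q : Fin (n + 1) → ℝ → ℝ :=
        Fin.cons (fun _ => (1 : ℝ)) (fun j y => f j.succ y / f 0 y) with hqdef
      have hq : ∀ j, AnalyticOnNhd ℝ (q j) B := by
        intro j
        refine Fin.cases ?_ ?_ j
        · rw [hqdef, Fin.cons_zero]; exact analyticOnNhd_const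
        · intro j
          rw [hqdef, Fin.cons_succ]
          exact ((hf j.succ).mono hBU).div ((hf 0).mono hBU) hBf0
      have heq : ∀ j, Set.EqOn (f j) (fun y => f 0 y * q j y) B := by
        intro j
        refine Fin.cases ?_ ?_ j
        · intro y _; rw [hqdef]; simp [Fin.cons_zero]
        · intro j y hy
          rw [hqdef]
          simp only [Fin.cons_succ]
          rw [mul_div_cancel₀ _ (hBf0 y hy)]
      have hWq : ∀ x ∈ B, (wronskiMatrix (fun j => deriv (q j.succ)) x).det = 0 := by
        intro x hx
        have h1 : (wronskiMatrix f x).det = (wronskiMatrix (fun j y => f 0 y * q j y) x).det := by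
          congr 1
          ext i j
          exact (heq j).iteratedDeriv_of_isOpen hBo (i : ℕ) hx
        have h2 := wronski_smul_det hBo ((hf 0).mono hBU) hq hx
        have h3 : (wronskiMatrix q x).det = 0 := by
          have h4 := hW x (hBU hx)
          rw [h1, h2] at h4
          rcases mul_eq_zero.mp h4 with h | h
          · exact absurd (pow_eq_zero_iff (n := n+1) (by omega) |>.mp h) (hBf0 x hx)
          · exact h
        have hq0 : q 0 = fun _ => (1 : ℝ) := by rw [hqdef]; exact Fin.cons_zero _ _
        have hQ : Fin.cons (fun _ => (1 : ℝ)) (fun j => q j.succ) = q := by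
          rw [← hq0]; exact Fin.cons_self_tail q
        calc (wronskiMatrix (fun j => deriv (q j.succ)) x).det
            = (wronskiMatrix (Fin.cons (fun _ => (1:ℝ)) (fun j => q j.succ)) x).det := by
              rw [wronski_cons_det]
          _ = (wronskiMatrix q x).det := by rw [hQ]
          _ = 0 := h3
      obtain ⟨c', hc'ne, hc'⟩ := ih B hBo (convex_ball x1 ε).isPreconnected ⟨x1, hBne⟩
        (fun j => deriv (q j.succ)) (fun j => ((hq j.succ).mono (le_refl _)).deriv) hWq
      -- F is constant on B
      set F : ℝ → ℝ := fun y => ∑ j, c' j * q j.succ y with hFdef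
      have hFdiff : ∀ y ∈ B, DifferentiableAt ℝ F y := by
        intro y hy
        exact DifferentiableAt.fun_sum fun j _ => ((hq j.succ y hy).differentiableAt).const_mul _
      have hFderiv : ∀ y ∈ B, deriv F y = 0 := by
        intro y hy
        rw [hFdef]
        rw [deriv_fun_sum fun j _ => ((hq j.succ y hy).differentiableAt).const_mul _]
        rw [Finset.sum_congr rfl fun j _ =>
          deriv_const_mul (c' j) ((hq j.succ y hy).differentiableAt)]
        exact hc' y hy
      have hconst : ∀ y ∈ B, F y = F x1 := by
        intro y hy
        refine (convex_ball x1 ε).is_const_of_fderivWithin_eq_zero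
          (fun z hz => (hFdiff z hz).differentiableWithinAt) (fun z hz => ?_) hy hBne
        rw [fderivWithin_of_isOpen hBo hz]
        have hd : HasDerivAt F 0 z := by
          have h := (hFdiff z hz).hasDerivAt
          rwa [hFderiv z hz] at h
        have h6 := hd.hasFDerivAt
        have hz0 : ContinuousLinearMap.toSpanSingleton ℝ (0 : ℝ) = 0 := by
          ext w; simp
        rw [hz0] at h6
        exact h6.fderiv
      set a := F x1 with hadef
      set c : Fin (n + 1) → ℝ := Fin.cons (-a) c' with hcdef
      have hcne : c ≠ 0 := by
        intro h
        apply hc'ne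
        ext j
        have := congrFun h j.succ
        rwa [hcdef, Fin.cons_succ] at this
      have hcomb : ∀ y ∈ B, ∑ j, c j * f j y = 0 := by
        intro y hy
        rw [Fin.sum_univ_succ]
        rw [hcdef]
        simp only [Fin.cons_zero, Fin.cons_succ]
        have h7 : ∑ j : Fin n, c' j * f j.succ y = a * f 0 y := by
          have h8 := hconst y hy
          rw [hFdef] at h8
          have h9 : ∑ j : Fin n, c' j * q j.succ y = a := h8
          calc ∑ j : Fin n, c' j * f j.succ y
              = ∑ j : Fin n, (c' j * q j.succ y) * f 0 y := by
                refine Finset.sum_congr rfl fun j _ => ?_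
                rw [hqdef]
                simp only [Fin.cons_succ]
                rw [mul_assoc, div_mul_cancel₀ _ (hBf0 y hy)]
            _ = (∑ j : Fin n, c' j * q j.succ y) * f 0 y := by rw [Finset.sum_mul]
            _ = a * f 0 y := by rw [h9]
        rw [h7]
        ring
      -- globalize by the identity theorem
      set Φ : ℝ → ℝ := fun y => ∑ j, c j * f j y with hΦdef
      have hΦa : AnalyticOnNhd ℝ Φ U :=
        Finset.analyticOnNhd_fun_sum _ fun j _ => analyticOnNhd_const.mul (hf j)
      have hΦ0 : Set.EqOn Φ 0 U := by
        refine hΦa.eqOn_zero_of_preconnected_of_eventuallyEq_zero hUc hx1U ?_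
        filter_upwards [hBo.mem_nhds hBne] with y hy using hcomb y hy
      exact ⟨c, hcne, fun x hx => hΦ0 hx⟩

lemma iteratedDeriv_sum_const_mul {ι : Type*} [Fintype ι] {h : ι → ℝ → ℝ} {s : Set ℝ}
    (hs : IsOpen s) (hh : ∀ j, AnalyticOnNhd ℝ (h j) s) (c : ι → ℝ) (n : ℕ) {x : ℝ}
    (hx : x ∈ s) :
    iteratedDeriv n (fun y => ∑ j, c j * h j y) x = ∑ j, c j * iteratedDeriv n (h j) x := by
  induction n generalizing x with
  | zero => simp
  | succ n ih =>
    rw [iteratedDeriv_succ]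
    have hev : iteratedDeriv n (fun y => ∑ j, c j * h j y) =ᶠ[𝓝 x]
        fun y => ∑ j, c j * iteratedDeriv n (h j) y := by
      filter_upwards [hs.mem_nhds hx] with y hy using ih hy
    rw [hev.deriv_eq, deriv_fun_sum fun j _ =>
      ((analyticOnNhd_iteratedDeriv (hh j) n) x hx).differentiableAt.const_mul _]
    refine Finset.sum_congr rfl fun j _ => ?_
    rw [deriv_const_mul _ ((analyticOnNhd_iteratedDeriv (hh j) n) x hx).differentiableAt,
      iteratedDeriv_succ]

/-- **Lemma 5.10**: the Wronski matrix of analytic functions `g₁, …, g_k`, linearly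
independent over `ℝ` and with everywhere non-vanishing Wronskian, is hierarchic. -/
theorem wronskian_hierarchic (k : ℕ) (hk : 1 ≤ k)
    (U : Set ℝ) (hU : IsOpen U) (hconn : U.OrdConnected)
    (g : Fin k → ℝ → ℝ) (hg : ∀ j, AnalyticOnNhd ℝ (g j) U)
    (hli : ∀ c : Fin k → ℝ, (∀ x ∈ U, ∑ j, c j * g j x = 0) → c = 0)
    (hW : ∀ x ∈ U, (wronskiMatrix g x).det ≠ 0) :
    Hierarchic (wronskiMatrix g) U := by
  intro V hd0 hdk
  set d := Module.finrank ℝ V with hd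
  set r := k - d with hrdef
  have hrk : r ≤ k := Nat.sub_le _ _
  have hfinrank_top : Module.finrank ℝ (Fin k → ℝ) = k := by
    simp [Module.finrank_pi]
  have hannrk : Module.finrank ℝ V.dualAnnihilator = r := by
    have h1 := Submodule.finrank_quotient_add_finrank V
    have h2 : Module.finrank ℝ ((Fin k → ℝ) ⧸ V) = Module.finrank ℝ V.dualAnnihilator :=
      (Subspace.quotEquivAnnihilator V).finrank_eq
    rw [hfinrank_top] at h1
    omega
  haveI : Module.Free ℝ V.dualAnnihilator :=
    Module.Free.of_basis (Module.Basis.ofVectorSpace ℝ ↥V.dualAnnihilator)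
  set bφ := Module.finBasisOfFinrankEq ℝ V.dualAnnihilator hannrk with hbφ
  set w : Fin r → Fin k → ℝ :=
    fun s j => (bφ s : Module.Dual ℝ (Fin k → ℝ)) (fun m => if j = m then 1 else 0) with hw
  have hφeval : ∀ (ψ : Module.Dual ℝ (Fin k → ℝ)) (v : Fin k → ℝ),
      ψ v = ∑ j, v j * ψ (fun m => if j = m then 1 else 0) := by
    intro ψ v
    conv_lhs => rw [pi_eq_sum_univ v, _root_.map_sum]
    refine Finset.sum_congr rfl fun j _ => ?_
    rw [_root_.map_smul, smul_eq_mul]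
  set f : Fin r → ℝ → ℝ := fun s x => ∑ j, w s j * g j x with hf
  have hfana : ∀ s, AnalyticOnNhd ℝ (f s) U :=
    fun s => Finset.analyticOnNhd_fun_sum _ fun j _ => analyticOnNhd_const.mul (hg j)
  have hfD : ∀ (s : Fin r) (i : ℕ), ∀ x ∈ U,
      iteratedDeriv i (f s) x = ∑ j, w s j * iteratedDeriv i (g j) x :=
    fun s i x hx => iteratedDeriv_sum_const_mul hU hg (w s) i hx
  set D : ℝ → ℝ := fun x => (wronskiMatrix f x).det with hD
  have hDana : AnalyticOnNhd ℝ D U := by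
    have hentry : ∀ (i s : Fin r), AnalyticOnNhd ℝ (fun x => wronskiMatrix f x i s) U :=
      fun i s => analyticOnNhd_iteratedDeriv (hfana s) (i : ℕ)
    have : D = fun x => ∑ σ : Equiv.Perm (Fin r),
        ((Equiv.Perm.sign σ : ℤ) : ℝ) * ∏ i, wronskiMatrix f x (σ i) i := by
      funext x
      show (wronskiMatrix f x).det = _
      rw [Matrix.det_apply']
    rw [this]
    exact Finset.analyticOnNhd_fun_sum _ fun σ _ =>
      analyticOnNhd_const.mul (Finset.analyticOnNhd_fun_prod _ fun i _ => hentry (σ i) i)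
  -- the pointwise claim
  have hclaim : ∀ x ∈ U, D x ≠ 0 → IsCompl V (Submodule.span ℝ
      ((fun j => wronskiMatrix g x j) '' {j : Fin k | (j : ℕ) < r})) := by
    intro x hxU hDx
    have himg : (fun j => wronskiMatrix g x j) '' {j : Fin k | (j : ℕ) < r}
        = Set.range (fun i : Fin r => wronskiMatrix g x (Fin.castLE hrk i)) := by
      ext v
      constructor
      · rintro ⟨j, hj, rfl⟩
        exact ⟨⟨(j : ℕ), hj⟩, by congr 1⟩
      · rintro ⟨i, rfl⟩
        exact ⟨Fin.castLE hrk i, i.isLt, rfl⟩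
    rw [himg]
    set e : Fin r → (Fin k → ℝ) := fun i => wronskiMatrix g x (Fin.castLE hrk i) with he
    set M := wronskiMatrix f x with hM
    have hMe : ∀ (i s : Fin r), M i s = (bφ s : Module.Dual ℝ (Fin k → ℝ)) (e i) := by
      intro i s
      have h1 : M i s = ∑ j, w s j * iteratedDeriv (i : ℕ) (g j) x := hfD s i x hxU
      rw [h1, hφeval (bφ s : Module.Dual ℝ (Fin k → ℝ)) (e i)]
      refine Finset.sum_congr rfl fun j _ => ?_
      have : e i j = iteratedDeriv (i : ℕ) (g j) x := rfl
      rw [this, mul_comm]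
    refine ⟨Submodule.disjoint_def.mpr fun z hzV hzW => ?_, codisjoint_iff.mpr ?_⟩
    · obtain ⟨cz, hcz⟩ := (Submodule.mem_span_range_iff_exists_fun ℝ).mp hzW
      have hvec : Matrix.vecMul cz M = 0 := by
        funext s
        have h2 : Matrix.vecMul cz M s = ∑ i, cz i * M i s := by
          simp [Matrix.vecMul, dotProduct]
        rw [h2]
        have h3 : ∑ i, cz i * M i s
            = (bφ s : Module.Dual ℝ (Fin k → ℝ)) (∑ i, cz i • e i) := by
          rw [_root_.map_sum]
          refine Finset.sum_congr rfl fun i _ => ?_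
          rw [_root_.map_smul, smul_eq_mul, hMe i s]
        rw [h3, hcz]
        exact (Submodule.mem_dualAnnihilator _).mp (bφ s).2 z hzV
      have hcz0 : cz = 0 := Matrix.eq_zero_of_vecMul_eq_zero hDx hvec
      rw [← hcz, hcz0]
      simp
    · by_contra hne
      obtain ⟨ψ, hψne, hψbot⟩ := Submodule.exists_dual_map_eq_bot_of_lt_top
        (lt_top_iff_ne_top.mpr hne) inferInstance
      have hψ0 : ∀ v ∈ V ⊔ Submodule.span ℝ (Set.range e), ψ v = 0 := by
        intro v hv
        have : ψ v ∈ Submodule.map ψ (V ⊔ Submodule.span ℝ (Set.range e)) :=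
          Submodule.mem_map_of_mem hv
        rw [hψbot] at this
        exact this
      have hψann : ψ ∈ V.dualAnnihilator :=
        (Submodule.mem_dualAnnihilator _).mpr fun v hv => hψ0 v (Submodule.mem_sup_left hv)
      set cψ : Fin r → ℝ := fun s => bφ.repr ⟨ψ, hψann⟩ s with hcψ
      have hψsum : ∑ s, cψ s • (bφ s) = (⟨ψ, hψann⟩ : V.dualAnnihilator) := bφ.sum_repr _
      have hψeq : ∀ v : Fin k → ℝ,
          ψ v = ∑ s, cψ s * (bφ s : Module.Dual ℝ (Fin k → ℝ)) v := by
        intro v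
        have h4 := congrArg (fun z : V.dualAnnihilator =>
          (z : Module.Dual ℝ (Fin k → ℝ)) v) hψsum
        simp only [AddSubmonoidClass.coe_finset_sum, Submodule.coe_smul,
          LinearMap.coe_sum, Finset.sum_apply, LinearMap.smul_apply, smul_eq_mul] at h4
        exact h4.symm
      have hmv : M.mulVec cψ = 0 := by
        funext i
        have h5 : M.mulVec cψ i = ∑ s, M i s * cψ s := by
          simp [Matrix.mulVec, dotProduct]
        rw [h5]
        have h6 : ∑ s, M i s * cψ s = ψ (e i) := by
          rw [hψeq (e i)]
          exact Finset.sum_congr rfl fun s _ => by rw [hMe i s]; ring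
        rw [h6]
        exact hψ0 (e i) (Submodule.mem_sup_right
          (Submodule.subset_span (Set.mem_range_self i)))
      have hc0 : cψ = 0 := Matrix.eq_zero_of_mulVec_eq_zero hDx hmv
      apply hψne
      have h7 : (⟨ψ, hψann⟩ : V.dualAnnihilator) = 0 := by
        rw [← hψsum, hc0]
        simp
      exact congrArg Subtype.val h7
  -- density
  intro x0 hx0
  have hpre : IsPreconnected U := hconn.isPreconnected
  set S : Set ℝ := {x | x ∈ U ∧ D x ≠ 0} with hS
  suffices hSx : x0 ∈ closure S by
    refine closure_mono ?_ hSx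
    intro y hy
    exact ⟨hy.1, hclaim y hy.1 hy.2⟩
  by_contra hnotin
  rw [Metric.mem_closure_iff] at hnotin
  push_neg at hnotin
  obtain ⟨ε, hε, hfar⟩ := hnotin
  obtain ⟨δ, hδ, hδU⟩ := Metric.isOpen_iff.mp hU x0 hx0
  have hzero : ∀ y ∈ Metric.ball x0 (min ε δ), D y = 0 := by
    intro y hy
    rw [Metric.mem_ball, lt_min_iff] at hy
    by_contra hDy
    have hyU : y ∈ U := hδU (Metric.mem_ball.mpr hy.2)
    have : ε ≤ dist x0 y := hfar y (show y ∈ S from ⟨hyU, hDy⟩)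
    rw [dist_comm] at this
    exact absurd hy.1 (not_lt.mpr this)
  have hDzU : Set.EqOn D 0 U := by
    refine hDana.eqOn_zero_of_preconnected_of_eventuallyEq_zero hpre hx0 ?_
    filter_upwards [Metric.ball_mem_nhds x0 (lt_min hε hδ)] with y hy using hzero y hy
  obtain ⟨c, hcne, hcsum⟩ := bocher r U hU hpre ⟨x0, hx0⟩ f hfana fun x hx => hDzU hx
  have hcoef : ∀ x ∈ U, ∑ j, (∑ s, c s * w s j) * g j x = 0 := by
    intro x hx
    calc ∑ j, (∑ s, c s * w s j) * g j x
        = ∑ j, ∑ s, c s * (w s j * g j x) := by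
          refine Finset.sum_congr rfl fun j _ => ?_
          rw [Finset.sum_mul]
          exact Finset.sum_congr rfl fun s _ => by ring
      _ = ∑ s, ∑ j, c s * (w s j * g j x) := Finset.sum_comm
      _ = ∑ s, c s * f s x := by
          refine Finset.sum_congr rfl fun s _ => ?_
          rw [hf, Finset.mul_sum]
      _ = 0 := hcsum x hx
  have hwz : (fun j => ∑ s, c s * w s j) = 0 := hli _ hcoef
  have hzero2 : ∑ s, c s • (bφ s) = (0 : V.dualAnnihilator) := by
    apply Subtype.ext
    simp only [AddSubmonoidClass.coe_finset_sum, Submodule.coe_smul, ZeroMemClass.coe_zero]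
    apply LinearMap.ext
    intro v
    simp only [LinearMap.coe_sum, Finset.sum_apply, LinearMap.smul_apply, smul_eq_mul,
      LinearMap.zero_apply]
    calc ∑ s, c s * (bφ s : Module.Dual ℝ (Fin k → ℝ)) v
        = ∑ s, c s * ∑ j, v j * w s j := by
          refine Finset.sum_congr rfl fun s _ => ?_
          rw [hφeval (bφ s : Module.Dual ℝ (Fin k → ℝ)) v]
      _ = ∑ s, ∑ j, v j * (c s * w s j) := by
          refine Finset.sum_congr rfl fun s _ => ?_
          rw [Finset.mul_sum]
          exact Finset.sum_congr rfl fun j _ => by ring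
      _ = ∑ j, v j * ∑ s, c s * w s j := by
          rw [Finset.sum_comm]
          exact Finset.sum_congr rfl fun j _ => by rw [Finset.mul_sum]
      _ = 0 := by
          refine Finset.sum_eq_zero fun j _ => ?_
          have hj := congrFun hwz j
          simp only [Pi.zero_apply] at hj
          rw [hj, mul_zero]
  have hcz : ∀ s, c s = 0 :=
    (Fintype.linearIndependent_iff (v := ⇑bφ)).mp bφ.linearIndependent c hzero2
  exact hcne (funext hcz)
end
end

section
/- Let k ≥ 2 and let 0 < θ_1 ≤ θ_2 ≤ … ≤ θ_{k−1} ≤ θ_k be real numbers. Put θ = (θ_1 θ_2 ⋯ θ_k)^{1/k} and Θ̃ = max_{1 ≤ r ≤ k−1} (θ_1 θ_2 ⋯ θ_r)/θ^r. Then Θ̃ ≤ (θ_{k−1}/θ_k)^{1/k} ≤ 1. -/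
noncomputable section

/-- The geometric mean `θ = (θ₁ ⋯ θ_k)^{1/k}`. -/
def geoMean {k : ℕ} (θ : Fin k → ℝ) : ℝ := (∏ i, θ i) ^ ((1 : ℝ) / k)

/-- `Θ̃ = max_{1 ≤ r ≤ k−1} (θ₁ ⋯ θ_r)/θ^r`. -/
private lemma key (k : ℕ) (hk : 2 ≤ k) (θ : Fin k → ℝ)
    (hpos : ∀ i, 0 < θ i) (hmono : Monotone θ) (r : ℕ) (hr : r < k - 1) :
    (∏ i ∈ Finset.univ.filter fun i : Fin k => (i : ℕ) ≤ r, θ i) /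
      geoMean θ ^ (r + 1) ≤
    (θ ⟨k - 2, by omega⟩ / θ ⟨k - 1, by omega⟩) ^ ((1 : ℝ) / k) := by
  have hrk : r < k := by omega
  set S : Finset (Fin k) := Finset.univ.filter fun i : Fin k => (i : ℕ) ≤ r with hS
  set P : ℝ := ∏ i ∈ S, θ i with hP
  set Q : ℝ := ∏ i ∈ Finset.univ.filter fun i : Fin k => ¬ (i : ℕ) ≤ r, θ i with hQ
  have hPQ : P * Q = ∏ i, θ i := Finset.prod_filter_mul_prod_filter_not _ _ _
  have hprodpos : (0:ℝ) < ∏ i, θ i := Finset.prod_pos fun i _ => hpos i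
  have hPpos : 0 < P := Finset.prod_pos fun i _ => hpos i
  have hQpos : 0 < Q := Finset.prod_pos fun i _ => hpos i
  have hcardS : S.card = r + 1 := by
    have : S = Finset.Iic (⟨r, hrk⟩ : Fin k) := by ext i; simp [hS, Fin.le_def]
    rw [this, Fin.card_Iic]
  -- the element k-1
  set e : Fin k := ⟨k - 1, by omega⟩ with he
  have heQ : e ∈ Finset.univ.filter fun i : Fin k => ¬ (i : ℕ) ≤ r := by
    simp [he]; omega
  -- P ≤ θ_r ^ (r+1)
  have hPle : P ≤ θ ⟨r, hrk⟩ ^ (r + 1) := by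
    calc P ≤ ∏ _i ∈ S, θ ⟨r, hrk⟩ := by
          apply Finset.prod_le_prod (fun i _ => (hpos i).le)
          intro i hi
          apply hmono
          simp only [hS, Finset.mem_filter] at hi
          exact hi.2
      _ = θ ⟨r, hrk⟩ ^ (r + 1) := by rw [Finset.prod_const, hcardS]
  -- Q ≥ θ_r ^ (k - r - 2) * θ_{k-1}
  have hQge : θ ⟨r, hrk⟩ ^ (k - r - 2) * θ e ≤ Q := by
    have hsplit := Finset.mul_prod_erase _ θ heQ
    have hcardQ : ((Finset.univ.filter fun i : Fin k => ¬ (i : ℕ) ≤ r).erase e).card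
        = k - r - 2 := by
      rw [Finset.card_erase_of_mem heQ, Finset.filter_not, Finset.card_sdiff_of_subset
        (Finset.filter_subset _ _), Finset.card_univ, Fintype.card_fin, hcardS]
      omega
    have h2 : θ ⟨r, hrk⟩ ^ (k - r - 2)
        ≤ ∏ i ∈ (Finset.univ.filter fun i : Fin k => ¬ (i : ℕ) ≤ r).erase e, θ i := by
      calc θ ⟨r, hrk⟩ ^ (k - r - 2)
          = ∏ _i ∈ (Finset.univ.filter fun i : Fin k => ¬ (i : ℕ) ≤ r).erase e,
              θ ⟨r, hrk⟩ := by rw [Finset.prod_const, hcardQ]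
        _ ≤ _ := by
            apply Finset.prod_le_prod (fun i _ => (hpos _).le)
            intro i hi
            apply hmono
            simp only [Finset.mem_erase, Finset.mem_filter, Fin.le_def] at hi ⊢
            omega
    calc θ ⟨r, hrk⟩ ^ (k - r - 2) * θ e
        ≤ (∏ i ∈ (Finset.univ.filter fun i : Fin k => ¬ (i : ℕ) ≤ r).erase e, θ i) * θ e :=
          mul_le_mul_of_nonneg_right h2 (hpos e).le
      _ = Q := by rw [hQ, ← hsplit, mul_comm]
  -- abbreviations
  set a : ℝ := θ ⟨r, hrk⟩ with ha
  set d : ℝ := θ ⟨k - 2, by omega⟩ with hd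
  have hapos : 0 < a := hpos _
  have hdpos : 0 < d := hpos _
  have hepos : 0 < θ e := hpos _
  have had : a ≤ d := hmono (by simp [Fin.le_def]; omega)
  have hde : d ≤ θ e := hmono (by simp [he, Fin.le_def]; omega)
  have hae : a ≤ θ e := had.trans hde
  obtain ⟨m, hm⟩ : ∃ m, k - r - 1 = m + 1 := ⟨k - r - 2, by omega⟩
  have hm2 : k - r - 2 = m := by omega
  have hchain : a ^ (r + 1) * θ e ≤ θ e ^ (r + 1) * d := by
    have h1 : a ^ r ≤ θ e ^ r := pow_le_pow_left₀ hapos.le hae r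
    calc a ^ (r + 1) * θ e = a ^ r * a * θ e := by rw [pow_succ]
      _ ≤ θ e ^ r * d * θ e := by
          apply mul_le_mul_of_nonneg_right _ hepos.le
          exact mul_le_mul h1 had hapos.le (pow_nonneg hepos.le r)
      _ = θ e ^ (r + 1) * d := by rw [pow_succ]; ring
  have hA : P ^ (k - r - 1) ≤ (a ^ (r + 1)) ^ (k - r - 1) :=
    pow_le_pow_left₀ hPpos.le hPle _
  have hB : (a ^ m * θ e) ^ (r + 1) ≤ Q ^ (r + 1) := by
    apply pow_le_pow_left₀ _ _ _
    · positivity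
    · rw [← hm2]; exact hQge
  have hstep : P ^ (k - r - 1) * θ e ≤ Q ^ (r + 1) * d := by
    calc P ^ (k - r - 1) * θ e ≤ (a ^ (r + 1)) ^ (k - r - 1) * θ e :=
          mul_le_mul_of_nonneg_right hA hepos.le
      _ = a ^ (m * (r + 1)) * (a ^ (r + 1) * θ e) := by
          rw [hm, ← pow_mul, show (r+1)*(m+1) = m*(r+1) + (r+1) by ring, pow_add]
          ring
      _ ≤ a ^ (m * (r + 1)) * (θ e ^ (r + 1) * d) :=
          mul_le_mul_of_nonneg_left hchain (pow_nonneg hapos.le _)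
      _ = (a ^ m * θ e) ^ (r + 1) * d := by rw [mul_pow, ← pow_mul]; ring
      _ ≤ Q ^ (r + 1) * d := mul_le_mul_of_nonneg_right hB hdpos.le
  have hmain : P ^ k * θ e ≤ (∏ i, θ i) ^ (r + 1) * d := by
    have hk' : P ^ k = P ^ (r + 1) * P ^ (k - r - 1) := by
      rw [← pow_add]; congr 1; omega
    calc P ^ k * θ e = P ^ (r + 1) * (P ^ (k - r - 1) * θ e) := by rw [hk']; ring
      _ ≤ P ^ (r + 1) * (Q ^ (r + 1) * d) :=
          mul_le_mul_of_nonneg_left hstep (pow_nonneg hPpos.le _)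
      _ = (P * Q) ^ (r + 1) * d := by rw [mul_pow]; ring
      _ = (∏ i, θ i) ^ (r + 1) * d := by rw [hPQ]
  -- now conclude via k-th powers
  have hk0 : (k : ℝ) ≠ 0 := by positivity
  have hgpos : 0 < geoMean θ := Real.rpow_pos_of_pos hprodpos _
  have hrhs : ((d / θ e) ^ ((1 : ℝ) / k)) ^ k = d / θ e := by
    rw [← Real.rpow_natCast ((d / θ e) ^ ((1:ℝ)/k)) k, ← Real.rpow_mul (by positivity),
      one_div, inv_mul_cancel₀ hk0, Real.rpow_one]
  have hglhs : (geoMean θ ^ (r + 1)) ^ k = (∏ i, θ i) ^ (r + 1) := by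
    rw [geoMean, ← pow_mul, ← Real.rpow_natCast _ ((r+1)*k), ← Real.rpow_mul hprodpos.le,
      ← Real.rpow_natCast (∏ i, θ i) (r+1)]
    congr 1
    push_cast
    field_simp
  have hlhs : (P / geoMean θ ^ (r + 1)) ^ k ≤ ((d / θ e) ^ ((1 : ℝ) / k)) ^ k := by
    rw [hrhs, div_pow, hglhs, div_le_div_iff₀ (by positivity) hepos]
    linarith [hmain]
  have hfin : P / geoMean θ ^ (r + 1) ≤ (d / θ e) ^ ((1 : ℝ) / k) := by
    have hk0' : k ≠ 0 := by omega
    exact le_of_pow_le_pow_left₀ hk0' (by positivity) hlhs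
  exact hfin


def ThetaTilde {k : ℕ} (θ : Fin k → ℝ) : ℝ :=
  ⨆ r : Fin (k - 1),
    (∏ i ∈ Finset.univ.filter fun i : Fin k => (i : ℕ) ≤ (r : ℕ), θ i) /
      geoMean θ ^ ((r : ℕ) + 1)

/-- **Lemma 5.11**: if `0 < θ₁ ≤ θ₂ ≤ … ≤ θ_k` then
`Θ̃ ≤ (θ_{k−1}/θ_k)^{1/k} ≤ 1`. -/
theorem thetaTilde_le (k : ℕ) (hk : 2 ≤ k) (θ : Fin k → ℝ)
    (hpos : ∀ i, 0 < θ i) (hmono : Monotone θ) :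
    ThetaTilde θ ≤ (θ ⟨k - 2, by omega⟩ / θ ⟨k - 1, by omega⟩) ^ ((1 : ℝ) / k) ∧
      (θ ⟨k - 2, by omega⟩ / θ ⟨k - 1, by omega⟩) ^ ((1 : ℝ) / k) ≤ 1 := by
  have hne : Nonempty (Fin (k - 1)) := ⟨⟨0, by omega⟩⟩
  constructor
  · apply ciSup_le
    intro r
    exact key k hk θ hpos hmono r r.2
  · apply Real.rpow_le_one
    · exact div_nonneg (hpos _).le (hpos _).le
    · rw [div_le_one (hpos _)]
      exact hmono (by simp [Fin.le_def]; omega)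
    · positivity
end
end

section
/- Let U ⊆ ℝ be an interval, y: U → ℝ^{n+1} analytic, and let z: U → ℝ^{n+1} be the dual map of y. Then for all x ∈ U and all integers i, j ≥ 0: z^{(j)}(x) · y^{(i)}(x) = 0 whenever 0 ≤ i + j ≤ n − 1, and z^{(j)}(x) · y^{(i)}(x) = (−1)^j W_y(x) whenever i + j = n. -/
open Filter

noncomputable section

/-- The `(n+1) × (n+1)` matrix whose rows are `y(x), y′(x), …, y^{(n−1)}(x), w`. -/
def borderMatrix {n : ℕ} (y : ℝ → Fin (n + 1) → ℝ) (x : ℝ) (w : Fin (n + 1) → ℝ) :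
    Matrix (Fin (n + 1)) (Fin (n + 1)) ℝ :=
  Matrix.of fun i c : Fin (n + 1) =>
    if (i : ℕ) < n then iteratedDeriv (i : ℕ) (fun t => y t c) x else w c

/-- The Wronskian `W_y(x)`: the determinant of the matrix whose rows are
`y(x), y′(x), …, y^{(n)}(x)`. -/
def Wronski {n : ℕ} (y : ℝ → Fin (n + 1) → ℝ) (x : ℝ) : ℝ :=
  (Matrix.of fun j c : Fin (n + 1) => iteratedDeriv (j : ℕ) (fun t => y t c) x).det

/-- **Lemma 7.3** (differential equations for the dual map): if `z` is the dual map
of `y`, i.e. `z(x) ⬝ w = det(y(x), y′(x), …, y^{(n−1)}(x), w)` for all `w`, then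
`z^{(j)} ⬝ y^{(i)} = 0` for `0 ≤ i + j ≤ n − 1` and
`z^{(j)} ⬝ y^{(i)} = (−1)^j W_y` for `i + j = n`. -/
theorem dual_map_identities {n : ℕ} (hn : 1 ≤ n)
    (U : Set ℝ) (hU : IsOpen U) (hconn : U.OrdConnected)
    (y : ℝ → Fin (n + 1) → ℝ) (hy : ∀ c, AnalyticOnNhd ℝ (fun t => y t c) U)
    (z : ℝ → Fin (n + 1) → ℝ)
    (hz : ∀ (x : ℝ) (w : Fin (n + 1) → ℝ),
      ∑ c, z x c * w c = (borderMatrix y x w).det) :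
    ∀ x ∈ U, ∀ i j : ℕ,
      (i + j < n →
        ∑ c, iteratedDeriv j (fun t => z t c) x * iteratedDeriv i (fun t => y t c) x
          = 0) ∧
      (i + j = n →
        ∑ c, iteratedDeriv j (fun t => z t c) x * iteratedDeriv i (fun t => y t c) x
          = (-1 : ℝ) ^ j * Wronski y x) := by
  -- iterated derivatives of the `y` coordinates are analytic on `U`
  have hyi : ∀ (c : Fin (n + 1)) (k : ℕ),
      AnalyticOnNhd ℝ (iteratedDeriv k (fun t => y t c)) U := by
    intro c k
    rw [iteratedDeriv_eq_iterate]
    exact (hy c).iterated_deriv k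
  -- the coordinates of `z` are explicit determinants
  have hzdef : ∀ c : Fin (n + 1),
      (fun t => z t c) = fun t => (borderMatrix y t (Pi.single c 1)).det := by
    intro c
    funext t
    have h := hz t (Pi.single c 1)
    simpa [Pi.single_apply, mul_ite, Finset.sum_ite_eq'] using h
  -- hence the coordinates of `z` are analytic on `U`
  have hzA : ∀ c : Fin (n + 1), AnalyticOnNhd ℝ (fun t => z t c) U := by
    intro c
    rw [hzdef c]
    simp only [Matrix.det_apply', borderMatrix, Matrix.of_apply]
    apply Finset.analyticOnNhd_fun_sum
    intro σ _
    apply analyticOnNhd_const.mul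
    apply Finset.analyticOnNhd_fun_prod
    intro i _
    by_cases h : ((σ i : ℕ) < n)
    · simp only [h, if_true]
      exact hyi i _
    · simp only [h, if_false]
      exact analyticOnNhd_const
  have hzi : ∀ (c : Fin (n + 1)) (k : ℕ),
      AnalyticOnNhd ℝ (iteratedDeriv k (fun t => z t c)) U := by
    intro c k
    rw [iteratedDeriv_eq_iterate]
    exact (hzA c).iterated_deriv k
  have key : ∀ j : ℕ, ∀ x ∈ U, ∀ i : ℕ,
      (i + j < n →
        ∑ c, iteratedDeriv j (fun t => z t c) x * iteratedDeriv i (fun t => y t c) x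
          = 0) ∧
      (i + j = n →
        ∑ c, iteratedDeriv j (fun t => z t c) x * iteratedDeriv i (fun t => y t c) x
          = (-1 : ℝ) ^ j * Wronski y x) := by
    intro j
    induction j with
    | zero =>
      intro x hx i
      simp only [iteratedDeriv_zero, pow_zero, one_mul]
      constructor
      · intro hi
        have hi' : i < n := by omega
        rw [hz x (fun c => iteratedDeriv i (fun t => y t c) x)]
        apply Matrix.det_zero_of_row_eq (i := (⟨i, by omega⟩ : Fin (n + 1)))
          (j := (⟨n, by omega⟩ : Fin (n + 1)))
        · intro h
          have := congrArg Fin.val h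
          simp at this
          omega
        · funext c
          simp only [borderMatrix, Matrix.of_apply]
          rw [if_pos hi', if_neg (by omega)]
      · intro hi
        have hi' : i = n := by omega
        rw [hz x (fun c => iteratedDeriv i (fun t => y t c) x)]
        have hmat : borderMatrix y x (fun c => iteratedDeriv i (fun t => y t c) x)
            = Matrix.of fun j c : Fin (n + 1) =>
                iteratedDeriv (j : ℕ) (fun t => y t c) x := by
          funext r c
          simp only [borderMatrix, Matrix.of_apply]
          split_ifs with h
          · rfl
          · have hr : (r : ℕ) = n := by omega
            rw [hr, hi']
        rw [hmat]
        rfl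
    | succ j ih =>
      intro x hx i
      have hda : ∀ c, DifferentiableAt ℝ (iteratedDeriv j (fun t => z t c)) x :=
        fun c => ((hzi c j) x hx).differentiableAt
      have hdb : ∀ (k : ℕ) c, DifferentiableAt ℝ (iteratedDeriv k (fun t => y t c)) x :=
        fun k c => ((hyi c k) x hx).differentiableAt
      have hder : ∀ i : ℕ,
          deriv (fun t => ∑ c, iteratedDeriv j (fun t => z t c) t
              * iteratedDeriv i (fun t => y t c) t) x
          = ∑ c, (iteratedDeriv (j + 1) (fun t => z t c) x
                * iteratedDeriv i (fun t => y t c) x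
              + iteratedDeriv j (fun t => z t c) x
                * iteratedDeriv (i + 1) (fun t => y t c) x) := by
        intro i
        rw [deriv_fun_sum (A := fun c t => iteratedDeriv j (fun t => z t c) t
            * iteratedDeriv i (fun t => y t c) t) (fun c _ => ((hda c).mul (hdb i c)))]
        refine Finset.sum_congr rfl fun c _ => ?_
        rw [deriv_fun_mul (hda c) (hdb i c), iteratedDeriv_succ, iteratedDeriv_succ]
      have main : i + j + 1 ≤ n →
          ∑ c, iteratedDeriv (j + 1) (fun t => z t c) x
              * iteratedDeriv i (fun t => y t c) x
          = - ∑ c, iteratedDeriv j (fun t => z t c) x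
              * iteratedDeriv (i + 1) (fun t => y t c) x := by
        intro hle
        have hev : (fun t => ∑ c, iteratedDeriv j (fun t => z t c) t
            * iteratedDeriv i (fun t => y t c) t) =ᶠ[nhds x] fun _ => (0 : ℝ) := by
          filter_upwards [hU.mem_nhds hx] with t ht
          exact (ih t ht i).1 (by omega)
        have h0 : deriv (fun t => ∑ c, iteratedDeriv j (fun t => z t c) t
            * iteratedDeriv i (fun t => y t c) t) x = 0 := by
          rw [hev.deriv_eq]
          simp
        rw [hder i, Finset.sum_add_distrib] at h0
        linarith
      constructor
      · intro hlt
        rw [main (by omega), (ih x hx (i + 1)).1 (by omega), neg_zero]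
      · intro heq
        rw [main (by omega), (ih x hx (i + 1)).2 (by omega)]
        ring
  intro x hx i j
  exact key j x hx i
end
end

section
/- Let U ⊆ ℝ be an interval, y: U → ℝ^{n+1} analytic, and let z: U → ℝ^{n+1} be the dual map of y. Then for all x ∈ U: |W_z(x)| ≥ |W_y(x)|^n, where W_y and W_z are the Wronskians of the coordinate functions of y and z respectively. -/
open Filter

noncomputable section

/-- An analytic function has analytic iterated derivatives. -/
lemma aux_analytic_iteratedDeriv {f : ℝ → ℝ} {U : Set ℝ} (hf : AnalyticOnNhd ℝ f U) (j : ℕ) :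
    AnalyticOnNhd ℝ (iteratedDeriv j f) U := by
  rw [iteratedDeriv_eq_iterate]
  exact hf.iterated_deriv j

lemma aux_hasDerivAt_iteratedDeriv {f : ℝ → ℝ} {U : Set ℝ} (hf : AnalyticOnNhd ℝ f U)
    (j : ℕ) {t : ℝ} (ht : t ∈ U) :
    HasDerivAt (iteratedDeriv j f) (iteratedDeriv (j + 1) f t) t := by
  have h := (aux_analytic_iteratedDeriv hf j t ht).differentiableAt.hasDerivAt
  rwa [iteratedDeriv_succ]

/-- **Lemma 7.4**: if `z` is the dual map of `y`, i.e.
`z(x) ⬝ w = det(y(x), y′(x), …, y^{(n−1)}(x), w)` for all `w`, then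
`|W_z(x)| ≥ |W_y(x)|^n` for all `x ∈ U`. -/
theorem wronskian_dual_lower_bound {n : ℕ} (hn : 1 ≤ n)
    (U : Set ℝ) (hU : IsOpen U) (hconn : U.OrdConnected)
    (y : ℝ → Fin (n + 1) → ℝ) (hy : ∀ c, AnalyticOnNhd ℝ (fun t => y t c) U)
    (z : ℝ → Fin (n + 1) → ℝ)
    (hz : ∀ (x : ℝ) (w : Fin (n + 1) → ℝ),
      ∑ c, z x c * w c = (borderMatrix y x w).det) :
    ∀ x ∈ U, |Wronski y x| ^ n ≤ |Wronski z x| := by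
  -- z is analytic on U
  have hzdef : ∀ (c : Fin (n + 1)) (t : ℝ),
      z t c = (borderMatrix y t (Pi.single c 1)).det := by
    intro c t
    have := hz t (Pi.single c 1)
    rwa [Finset.sum_eq_single c (by
      intro b _ hb
      simp [Pi.single_apply, hb]) (by simp), Pi.single_eq_same, mul_one] at this
  have hza : ∀ c, AnalyticOnNhd ℝ (fun t => z t c) U := by
    intro c
    have : AnalyticOnNhd ℝ (fun t => (borderMatrix y t (Pi.single c 1)).det) U := by
      simp only [Matrix.det_apply]
      apply Finset.analyticOnNhd_fun_sum
      intro σ _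
      simp only [Units.smul_def, zsmul_eq_mul]
      apply AnalyticOnNhd.mul analyticOnNhd_const
      apply Finset.analyticOnNhd_fun_prod
      intro i _
      simp only [borderMatrix, Matrix.of_apply]
      by_cases h : ((σ i : Fin (n+1)) : ℕ) < n
      · simp only [h, if_true]
        exact aux_analytic_iteratedDeriv (hy i) _
      · simp only [h, if_false]
        exact analyticOnNhd_const
    have heq : (fun t => z t c) = fun t => (borderMatrix y t (Pi.single c 1)).det :=
      funext fun t => hzdef c t
    rw [heq]; exact this
  -- the key bilinear identities
  have key : ∀ j k : ℕ, j + k ≤ n → ∀ t ∈ U,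
      (∑ c, iteratedDeriv j (fun s => z s c) t * iteratedDeriv k (fun s => y s c) t) =
        (if j + k < n then 0 else (-1:ℝ)^j * Wronski y t) := by
    intro j
    induction j with
    | zero =>
      intro k hk t ht
      simp only [iteratedDeriv_zero, zero_add]
      rw [hz t (fun c => iteratedDeriv k (fun s => y s c) t)]
      by_cases hkn : k < n
      · rw [if_pos hkn]
        apply Matrix.det_zero_of_row_eq (i := (⟨k, by omega⟩ : Fin (n+1))) (j := Fin.last n)
        · exact Fin.ne_of_val_ne (by simp [Fin.last]; omega)
        · funext c
          simp [borderMatrix, hkn, Fin.last]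
      · have hkeq : k = n := by omega
        rw [if_neg (by omega), pow_zero, one_mul]
        have hrow : borderMatrix y t (fun c => iteratedDeriv k (fun s => y s c) t)
            = Matrix.of fun j c : Fin (n+1) => iteratedDeriv (j:ℕ) (fun s => y s c) t := by
          funext i c
          simp only [borderMatrix, Matrix.of_apply]
          by_cases hi : (i : ℕ) < n
          · rw [if_pos hi]
          · rw [if_neg hi]
            have hieq : k = (i : ℕ) := by omega
            rw [hieq]
        rw [hrow]
        rfl
    | succ j ih =>
      intro k hk t ht
      have hjk : j + k < n := by omega
      have hsum : ∀ s ∈ U,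
          (∑ c, iteratedDeriv j (fun u => z u c) s * iteratedDeriv k (fun u => y u c) s)
            = 0 := by
        intro s hs
        have h := ih k (by omega) s hs
        rwa [if_pos hjk] at h
      have hder : HasDerivAt
          (fun s => ∑ c, iteratedDeriv j (fun u => z u c) s * iteratedDeriv k (fun u => y u c) s)
          (∑ c, (iteratedDeriv (j+1) (fun u => z u c) t * iteratedDeriv k (fun u => y u c) t
            + iteratedDeriv j (fun u => z u c) t * iteratedDeriv (k+1) (fun u => y u c) t)) t := by
        apply HasDerivAt.fun_sum
        intro c _
        exact (aux_hasDerivAt_iteratedDeriv (hza c) j ht).mul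
          (aux_hasDerivAt_iteratedDeriv (hy c) k ht)
      have hzero : HasDerivAt
          (fun s => ∑ c, iteratedDeriv j (fun u => z u c) s * iteratedDeriv k (fun u => y u c) s)
          0 t := by
        have hev : (fun s => ∑ c, iteratedDeriv j (fun u => z u c) s
            * iteratedDeriv k (fun u => y u c) s) =ᶠ[nhds t] (fun _ => (0:ℝ)) :=
          Filter.eventually_of_mem (hU.mem_nhds ht) hsum
        exact (hasDerivAt_const t (0:ℝ)).congr_of_eventuallyEq hev
      have heq0 := hder.unique hzero
      rw [Finset.sum_add_distrib] at heq0
      have h2 := ih (k+1) (by omega) t ht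
      by_cases hcase : (j+1) + k < n
      · rw [if_pos hcase]
        rw [if_pos (by omega)] at h2
        linarith
      · rw [if_neg hcase]
        rw [if_neg (by omega)] at h2
        have hpow : (-1:ℝ)^(j+1) = -(-1:ℝ)^j := by ring
        rw [hpow]
        linarith
  -- final argument
  intro x hx
  by_cases hW : Wronski y x = 0
  · rw [hW, abs_zero, zero_pow (by omega)]
    exact abs_nonneg _
  · set Z : Matrix (Fin (n+1)) (Fin (n+1)) ℝ :=
      Matrix.of fun j c : Fin (n+1) => iteratedDeriv (j:ℕ) (fun s => z s c) x with hZ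
    set Y : Matrix (Fin (n+1)) (Fin (n+1)) ℝ :=
      Matrix.of fun k c : Fin (n+1) => iteratedDeriv (k:ℕ) (fun s => y s c) x with hY
    set M : Matrix (Fin (n+1)) (Fin (n+1)) ℝ := Z * Y.transpose with hM
    have hMentry : ∀ j k : Fin (n+1), (j:ℕ) + (k:ℕ) ≤ n →
        M j k = (if (j:ℕ) + (k:ℕ) < n then 0 else (-1:ℝ)^(j:ℕ) * Wronski y x) := by
      intro j k hjk
      rw [← key (j:ℕ) (k:ℕ) hjk x hx]
      simp [hM, hZ, hY, Matrix.mul_apply]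
    -- reversed-column matrix is lower triangular
    have hlow : (M.submatrix id Fin.rev).BlockTriangular OrderDual.toDual := by
      intro i j hij
      have hij' : (i:ℕ) < (j:ℕ) := hij
      have hjn : (j:ℕ) ≤ n := Nat.lt_succ_iff.mp j.isLt
      have hrev : ((Fin.rev j : Fin (n+1)) : ℕ) = n - (j:ℕ) := by
        rw [Fin.val_rev]; omega
      have hle : (i:ℕ) + ((Fin.rev j : Fin (n+1)) : ℕ) ≤ n := by omega
      have := hMentry i (Fin.rev j) hle
      rw [if_pos (by omega)] at this
      simpa [Matrix.submatrix_apply] using this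
    have hdiag : ∀ i : Fin (n+1),
        (M.submatrix id Fin.rev) i i = (-1:ℝ)^(i:ℕ) * Wronski y x := by
      intro i
      have hin : (i:ℕ) ≤ n := Nat.lt_succ_iff.mp i.isLt
      have hrev : ((Fin.rev i : Fin (n+1)) : ℕ) = n - (i:ℕ) := by
        rw [Fin.val_rev]; omega
      have hle : (i:ℕ) + ((Fin.rev i : Fin (n+1)) : ℕ) ≤ n := by omega
      have := hMentry i (Fin.rev i) hle
      rw [if_neg (by omega)] at this
      simpa [Matrix.submatrix_apply, hrev] using this
    have hdet1 : (M.submatrix id Fin.rev).det = ∏ i : Fin (n+1), (-1:ℝ)^(i:ℕ) * Wronski y x := by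
      rw [Matrix.det_of_lowerTriangular _ hlow]
      exact Finset.prod_congr rfl fun i _ => hdiag i
    have habs1 : |(M.submatrix id Fin.rev).det| = |Wronski y x| ^ (n+1) := by
      rw [hdet1, Finset.abs_prod]
      have : ∀ i : Fin (n+1), |(-1:ℝ)^(i:ℕ) * Wronski y x| = |Wronski y x| := by
        intro i
        rw [abs_mul, abs_pow, abs_neg, abs_one, one_pow, one_mul]
      rw [Finset.prod_congr rfl fun i _ => this i, Finset.prod_const, Finset.card_univ,
        Fintype.card_fin]
    have habs2 : |(M.submatrix id Fin.rev).det| = |M.det| := by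
      have : M.submatrix id Fin.rev = M.submatrix id (Fin.revPerm : Equiv.Perm (Fin (n+1))) := rfl
      rw [this, Matrix.det_permute', abs_mul]
      have : |((Equiv.Perm.sign (Fin.revPerm : Equiv.Perm (Fin (n+1))) : ℤ) : ℝ)| = 1 := by
        rcases Int.units_eq_one_or (Equiv.Perm.sign (Fin.revPerm : Equiv.Perm (Fin (n+1)))) with h | h
        · rw [h]; norm_num
        · rw [h]; norm_num
      rw [this, one_mul]
    have hdetM : M.det = Wronski z x * Wronski y x := by
      rw [hM, Matrix.det_mul, Matrix.det_transpose]
      rfl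
    have hkey : |Wronski z x| * |Wronski y x| = |Wronski y x| ^ (n+1) := by
      rw [← abs_mul, ← hdetM, ← habs2, habs1]
    have hWpos : 0 < |Wronski y x| := abs_pos.mpr hW
    have : |Wronski z x| = |Wronski y x| ^ n := by
      have h := hkey
      rw [pow_succ] at h
      exact mul_right_cancel₀ (ne_of_gt hWpos) h
    rw [this]
end
end
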